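/- For integers $k,m$ with $1\le k\le m$ and $\gcd(k,m)=1$ and $m>1$, the rational number $d^{(a)}_{k,m}=\frac{(-1)^k}{m}\cdot\frac{\prod_{j=1}^{m-1}(ma+j+k)}{k!\,(m-k)!}$ is an integer for every integer $a\ge 0$. -/

import Mathlib

open Finset

lemma fact_mul_prod_Icc (n : ℕ) : ∀ b : ℕ,
    n.factorial * (∏ j ∈ Finset.Icc 1 b, (n + j)) = (n + b).factorial := by
  intro b
  induction b with
  | zero => simp
  | succ b ih =>
      rw [Finset.prod_Icc_succ_top (by omega), ← mul_assoc, ih]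
      rw [show n + (b+1) = (n+b) + 1 from rfl, Nat.factorial_succ]
      ring

/-- For coprime `k, m` with `1 ≤ k ≤ m`, `m > 1` and any integer `a ≥ 0`, the
rational number `d^{(a)}_{k,m} = ((-1)^k/m) · ∏_{j=1}^{m-1}(ma+j+k) / (k!(m-k)!)`
is an integer. -/
theorem dOV_coprime_is_integer (a k m : ℕ) (hk : 1 ≤ k) (hkm : k ≤ m)
    (hm : 1 < m) (hcop : Nat.Coprime k m) :
    ∃ d : ℤ,
      ((-1 : ℚ) ^ k / (m : ℚ)) *
          ((∏ j ∈ Finset.Icc 1 (m - 1), ((m * a + j + k : ℕ) : ℚ)) /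
            ((k.factorial : ℚ) * ((m - k).factorial : ℚ)))
        = (d : ℚ) := by
  set n := m * a + k with hn
  have hn1 : 1 ≤ n := by omega
  -- m divides choose m k
  have hid1 : m * (m-1).choose (k-1) = m.choose k * k := by
    have h := Nat.add_one_mul_choose_eq (m-1) (k-1)
    rw [Nat.sub_add_cancel hk, Nat.sub_add_cancel (le_of_lt hm)] at h
    exact h
  have h1 : m ∣ m.choose k :=
    (Nat.Coprime.dvd_of_dvd_mul_right hcop.symm ⟨_, hid1.symm⟩)
  -- (n+m) divides choose (n+m) n
  have hcop2 : Nat.Coprime (n + m) n := by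
    have h' : Nat.Coprime m n := by
      rw [hn, Nat.coprime_mul_left_add_right]
      exact hcop.symm
    rw [show n + m = m + n from by ring, Nat.coprime_add_self_left]
    exact h'
  have hid2 : (n + m) * (n + m - 1).choose (n-1) = (n+m).choose n * n := by
    have h := Nat.add_one_mul_choose_eq (n + m - 1) (n-1)
    rw [Nat.sub_add_cancel hn1, Nat.sub_add_cancel (by omega)] at h
    exact h
  have h2 : (n + m) ∣ (n+m).choose n :=
    (Nat.Coprime.dvd_of_dvd_mul_right hcop2 ⟨_, hid2.symm⟩)
  obtain ⟨c1, hc1⟩ := h1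
  obtain ⟨c2, hc2⟩ := h2
  -- key natural number identity
  have hP : n.factorial * (∏ j ∈ Finset.Icc 1 (m-1), (n + j)) = (n + (m-1)).factorial :=
    fact_mul_prod_Icc n (m-1)
  have key : (∏ j ∈ Finset.Icc 1 (m-1), (n + j))
      = m * (k.factorial * ((m-k).factorial * (c1 * c2))) := by
    have hpos : 0 < n.factorial * (n + m) := by positivity
    refine Nat.eq_of_mul_eq_mul_left hpos ?_
    have lhs : n.factorial * (n + m) * (∏ j ∈ Finset.Icc 1 (m-1), (n + j))
        = (n + m).factorial := by
      rw [show n.factorial * (n+m) * (∏ j ∈ Finset.Icc 1 (m-1), (n + j))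
          = (n.factorial * (∏ j ∈ Finset.Icc 1 (m-1), (n + j))) * (n+m) from by ring, hP]
      rw [show n + m = (n + (m-1)) + 1 from by omega, Nat.factorial_succ]
      ring
    rw [lhs]
    refine Eq.symm ?_
    have hbin : (n+m).choose n * n.factorial * m.factorial = (n+m).factorial := by
      have := Nat.choose_mul_factorial_mul_factorial (show n ≤ n + m from by omega)
      rwa [Nat.add_sub_cancel_left] at this
    have hbin2 : m.choose k * k.factorial * (m-k).factorial = m.factorial :=
      Nat.choose_mul_factorial_mul_factorial hkm
    calc n.factorial * (n + m) * (m * (k.factorial * ((m-k).factorial * (c1 * c2))))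
        = ((n+m) * c2) * n.factorial * ((m * c1) * k.factorial * (m-k).factorial) := by ring
      _ = (n+m).choose n * n.factorial * (m.choose k * k.factorial * (m-k).factorial) := by
          rw [← hc1, ← hc2]
      _ = (n+m).choose n * n.factorial * m.factorial := by rw [hbin2]
      _ = (n+m).factorial := hbin
  refine ⟨(-1)^k * (c1 * c2), ?_⟩
  have hprod : (∏ j ∈ Finset.Icc 1 (m - 1), ((m * a + j + k : ℕ) : ℚ))
      = ((∏ j ∈ Finset.Icc 1 (m-1), (n + j) : ℕ) : ℚ) := by
    push_cast
    refine Finset.prod_congr rfl fun j _ => ?_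
    push_cast [hn]
    ring
  rw [hprod, key]
  have hm0 : (m : ℚ) ≠ 0 := by positivity
  have hkf : (k.factorial : ℚ) ≠ 0 := by positivity
  have hmkf : ((m-k).factorial : ℚ) ≠ 0 := by positivity
  push_cast
  field_simp
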